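/- Let ξ be a purely imaginary unit octonion orthogonal to i, and set r_ξ = (1+i)(1+ξ)/2. Then r_ξ is a unit octonion and r_ξ · i · conj(r_ξ) = ξ. -/

import Mathlib

/-- The octonions, as the Cayley–Dickson double of the quaternions:
pairs `(a, b)` of quaternions with `(a,b)(u,v) = (au - v̄ b, b ū + v a)`. -/
@[ext] structure Oct where
  x : Quaternion ℝ
  y : Quaternion ℝ

namespace Oct

noncomputable instance : Zero Oct := ⟨⟨0, 0⟩⟩
noncomputable instance : One Oct := ⟨⟨1, 0⟩⟩
noncomputable instance : Add Oct := ⟨fun p q => ⟨p.x + q.x, p.y + q.y⟩⟩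
noncomputable instance : Neg Oct := ⟨fun p => ⟨-p.x, -p.y⟩⟩
noncomputable instance : Sub Oct := ⟨fun p q => p + -q⟩
noncomputable instance : Mul Oct := ⟨fun p q => ⟨p.x * q.x - star q.y * p.y, p.y * star q.x + q.y * p.x⟩⟩
noncomputable instance : SMul ℝ Oct := ⟨fun t p => ⟨t • p.x, t • p.y⟩⟩

/-- Octonion conjugation: `(a, b)̄ = (ā, -b)`. -/
noncomputable def conj (p : Oct) : Oct := ⟨star p.x, -p.y⟩

/-- The real part of an octonion. -/
noncomputable def re (p : Oct) : ℝ := p.x.re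

/-- The Euclidean inner product on the octonions: `⟨p, q⟩ = Re (p q̄)`. -/
noncomputable def inner (p q : Oct) : ℝ := (p * conj q).re

/-- The squared norm of an octonion. -/
noncomputable def normSq (p : Oct) : ℝ := inner p p

/-- The basic imaginary unit `i` of the octonions. -/
noncomputable def i : Oct := ⟨⟨0, 1, 0, 0⟩, 0⟩

/-- The inverse of an octonion: `r⁻¹ = r̄ / |r|²`. -/
noncomputable def inv (p : Oct) : Oct := (normSq p)⁻¹ • conj p

end Oct


namespace Oct
@[simp] lemma mul_x (p q : Oct) : (p * q).x = p.x * q.x - star q.y * p.y := rfl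
@[simp] lemma mul_y (p q : Oct) : (p * q).y = p.y * star q.x + q.y * p.x := rfl
@[simp] lemma add_x (p q : Oct) : (p + q).x = p.x + q.x := rfl
@[simp] lemma add_y (p q : Oct) : (p + q).y = p.y + q.y := rfl
@[simp] lemma one_x : (1 : Oct).x = 1 := rfl
@[simp] lemma one_y : (1 : Oct).y = 0 := rfl
@[simp] lemma smul_x (t : ℝ) (p : Oct) : (t • p).x = t • p.x := rfl
@[simp] lemma smul_y (t : ℝ) (p : Oct) : (t • p).y = t • p.y := rfl
@[simp] lemma conj_x (p : Oct) : (conj p).x = star p.x := rfl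
@[simp] lemma conj_y (p : Oct) : (conj p).y = -p.y := rfl
abbrev qmk (a b c d : ℝ) : Quaternion ℝ := ⟨a, b, c, d⟩
@[simp] lemma i_x : Oct.i.x = qmk 0 1 0 0 := rfl
@[simp] lemma i_y : Oct.i.y = 0 := rfl
end Oct

set_option maxHeartbeats 2000000 in
/-- For a purely imaginary unit octonion `ξ` orthogonal to `i`, the octonion
`r_ξ = (1+i)(1+ξ)/2` is a unit octonion and `r_ξ i r̄_ξ = ξ`. -/
theorem oct_translating_automorphism (ξ : Oct) (him : Oct.re ξ = 0)
    (hunit : Oct.normSq ξ = 1) (horth : Oct.inner ξ Oct.i = 0) :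
    Oct.normSq ((1 / 2 : ℝ) • ((1 + Oct.i) * (1 + ξ))) = 1 ∧
    ((1 / 2 : ℝ) • ((1 + Oct.i) * (1 + ξ)) * Oct.i) *
        Oct.conj ((1 / 2 : ℝ) • ((1 + Oct.i) * (1 + ξ))) = ξ := by
  obtain ⟨ar, ai, aj, ak, br, bi, bj, bk, rfl⟩ : ∃ ar ai aj ak br bi bj bk : ℝ,
      ξ = ⟨Oct.qmk ar ai aj ak, Oct.qmk br bi bj bk⟩ := ⟨_, _, _, _, _, _, _, _, rfl⟩
  simp only [Oct.re] at him
  simp only [Oct.normSq, Oct.inner, Oct.re, Oct.mul_x, Oct.conj_x, Oct.conj_y, Oct.mul_y, Oct.i_x, Oct.i_y,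
      Oct.add_x, Oct.add_y, Oct.one_x, Oct.one_y, Oct.smul_x, Oct.smul_y,
      Quaternion.re_mul, Quaternion.imI_mul, Quaternion.imJ_mul, Quaternion.imK_mul,
      Quaternion.re_add, Quaternion.imI_add, Quaternion.imJ_add, Quaternion.imK_add,
      Quaternion.re_sub, Quaternion.imI_sub, Quaternion.imJ_sub, Quaternion.imK_sub,
      Quaternion.re_neg, Quaternion.imI_neg, Quaternion.imJ_neg, Quaternion.imK_neg,
      Quaternion.re_smul, Quaternion.imI_smul, Quaternion.imJ_smul, Quaternion.imK_smul,
      Quaternion.re_star, Quaternion.imI_star, Quaternion.imJ_star, Quaternion.imK_star,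
      Quaternion.re_one, Quaternion.imI_one, Quaternion.imJ_one, Quaternion.imK_one,
      Quaternion.re_zero, Quaternion.imI_zero, Quaternion.imJ_zero, Quaternion.imK_zero,
      smul_eq_mul] at hunit horth
  subst him
  have hai : ai = 0 := by linarith
  subst hai
  refine ⟨?_, ?_⟩
  · simp only [Oct.normSq, Oct.inner, Oct.re, Oct.mul_x, Oct.conj_x, Oct.conj_y, Oct.mul_y, Oct.i_x, Oct.i_y,
      Oct.add_x, Oct.add_y, Oct.one_x, Oct.one_y, Oct.smul_x, Oct.smul_y,
      Quaternion.re_mul, Quaternion.imI_mul, Quaternion.imJ_mul, Quaternion.imK_mul,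
      Quaternion.re_add, Quaternion.imI_add, Quaternion.imJ_add, Quaternion.imK_add,
      Quaternion.re_sub, Quaternion.imI_sub, Quaternion.imJ_sub, Quaternion.imK_sub,
      Quaternion.re_neg, Quaternion.imI_neg, Quaternion.imJ_neg, Quaternion.imK_neg,
      Quaternion.re_smul, Quaternion.imI_smul, Quaternion.imJ_smul, Quaternion.imK_smul,
      Quaternion.re_star, Quaternion.imI_star, Quaternion.imJ_star, Quaternion.imK_star,
      Quaternion.re_one, Quaternion.imI_one, Quaternion.imJ_one, Quaternion.imK_one,
      Quaternion.re_zero, Quaternion.imI_zero, Quaternion.imJ_zero, Quaternion.imK_zero,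
      smul_eq_mul]
    linear_combination (1/2 : ℝ) * hunit
  · refine Oct.ext (Quaternion.ext _ _ ?_ ?_ ?_ ?_) (Quaternion.ext _ _ ?_ ?_ ?_ ?_) <;>
      simp only [Oct.mul_x, Oct.conj_x, Oct.conj_y, Oct.mul_y, Oct.i_x, Oct.i_y,
      Oct.add_x, Oct.add_y, Oct.one_x, Oct.one_y, Oct.smul_x, Oct.smul_y,
      Quaternion.re_mul, Quaternion.imI_mul, Quaternion.imJ_mul, Quaternion.imK_mul,
      Quaternion.re_add, Quaternion.imI_add, Quaternion.imJ_add, Quaternion.imK_add,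
      Quaternion.re_sub, Quaternion.imI_sub, Quaternion.imJ_sub, Quaternion.imK_sub,
      Quaternion.re_neg, Quaternion.imI_neg, Quaternion.imJ_neg, Quaternion.imK_neg,
      Quaternion.re_smul, Quaternion.imI_smul, Quaternion.imJ_smul, Quaternion.imK_smul,
      Quaternion.re_star, Quaternion.imI_star, Quaternion.imJ_star, Quaternion.imK_star,
      Quaternion.re_one, Quaternion.imI_one, Quaternion.imJ_one, Quaternion.imK_one,
      Quaternion.re_zero, Quaternion.imI_zero, Quaternion.imJ_zero, Quaternion.imK_zero,
      smul_eq_mul] <;>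
      [skip; linear_combination (-1/2 : ℝ) * hunit; skip; skip; skip; skip; skip; skip] <;>
      ring
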